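/- Let T := { (z₁, z₂) ∈ ℝ² : 0 < z₁, 0 < z₂, z₁ + z₂ < π/2 }, let V(z₁, z₂) := ( sin(2z₁ + 2z₂) − sin(2z₂), sin(2z₁) − sin(2z₁ + 2z₂) ), and let E(z₁, z₂) := cos(2z₁) + cos(2z₂) − cos(2z₁ + 2z₂). Then: (i) for every differentiable curve z : ℝ → ℝ² with z(t) ∈ T and z'(t) = V(z(t)) for all t ∈ ℝ, the function t ↦ E(z(t)) is constant; (ii) a point z ∈ T satisfies V(z) = 0 if and only if z = (π/6, π/6), and E(z) ≤ 3/2 for all z ∈ T with equality exactly at (π/6, π/6); (iii) every differentiable z : ℝ → ℝ² with z(t) ∈ T and z'(t) = V(z(t)) for all t, and with z(0) ≠ (π/6, π/6), is periodic: there exists τ > 0 such that z(t + τ) = z(t) for all t ∈ ℝ. -/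

import Mathlib

open Real Set

noncomputable section

/-- The open triangle `T = {(z₁,z₂) : 0 < z₁, 0 < z₂, z₁ + z₂ < π/2}`. -/
def triT : Set (ℝ × ℝ) :=
  {z : ℝ × ℝ | 0 < z.1 ∧ 0 < z.2 ∧ z.1 + z.2 < Real.pi / 2}

/-- The vector field of the three-point-vortex gap system. -/
def gapField (z : ℝ × ℝ) : ℝ × ℝ :=
  (Real.sin (2 * z.1 + 2 * z.2) - Real.sin (2 * z.2),
    Real.sin (2 * z.1) - Real.sin (2 * z.1 + 2 * z.2))

/-- The Hamiltonian `E(z₁,z₂) = cos(2z₁) + cos(2z₂) − cos(2z₁ + 2z₂)`. -/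
def gapEnergy (z : ℝ × ℝ) : ℝ :=
  Real.cos (2 * z.1) + Real.cos (2 * z.2) - Real.cos (2 * z.1 + 2 * z.2)

lemma sin_lip : LipschitzWith 1 Real.sin := by
  apply lipschitzWith_of_nnnorm_deriv_le Real.differentiable_sin
  intro x
  rw [Real.deriv_sin, ← NNReal.coe_le_coe]
  simpa [Real.norm_eq_abs] using Real.abs_cos_le_one x

lemma abs_sin_sub (a b : ℝ) : |Real.sin a - Real.sin b| ≤ |a - b| := by
  have := sin_lip.dist_le_mul a b
  simpa [Real.dist_eq] using this

lemma gapField_lip : LipschitzWith 6 gapField := by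
  apply LipschitzWith.of_dist_le_mul
  intro z w
  have h1 : |z.1 - w.1| ≤ dist z w := by
    rw [Prod.dist_eq, Real.dist_eq]; exact le_max_left _ _
  have h2 : |z.2 - w.2| ≤ dist z w := by
    rw [Prod.dist_eq]; exact le_max_right _ _ |>.trans_eq' (Real.dist_eq _ _).symm
  have comp : ∀ a b c d : ℝ, |Real.sin a - Real.sin b - (Real.sin c - Real.sin d)|
      ≤ |a - c| + |b - d| := by
    intro a b c d
    calc |Real.sin a - Real.sin b - (Real.sin c - Real.sin d)|
        = |(Real.sin a - Real.sin c) - (Real.sin b - Real.sin d)| := by ring_nf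
      _ ≤ |Real.sin a - Real.sin c| + |Real.sin b - Real.sin d| := abs_sub _ _
      _ ≤ |a - c| + |b - d| := add_le_add (abs_sin_sub _ _) (abs_sin_sub _ _)
  rw [Prod.dist_eq]
  have key1 : |(2*z.1+2*z.2) - (2*w.1+2*w.2)| ≤ 2*|z.1-w.1| + 2*|z.2-w.2| := by
    calc |(2*z.1+2*z.2) - (2*w.1+2*w.2)| = |2*(z.1-w.1) + 2*(z.2-w.2)| := by ring_nf
      _ ≤ |2*(z.1-w.1)| + |2*(z.2-w.2)| := abs_add_le _ _
      _ = 2*|z.1-w.1| + 2*|z.2-w.2| := by rw [abs_mul, abs_mul]; norm_num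
  have key2 : |2*z.2 - 2*w.2| = 2*|z.2-w.2| := by
    rw [show (2*z.2 - 2*w.2) = 2*(z.2-w.2) by ring, abs_mul]; norm_num
  have key3 : |2*z.1 - 2*w.1| = 2*|z.1-w.1| := by
    rw [show (2*z.1 - 2*w.1) = 2*(z.1-w.1) by ring, abs_mul]; norm_num
  have e1 : dist (gapField z).1 (gapField w).1 ≤ 6 * dist z w := by
    rw [Real.dist_eq]
    refine (comp _ _ _ _).trans ?_
    rw [key2]
    nlinarith [key1, h1, h2, abs_nonneg (z.1-w.1), abs_nonneg (z.2-w.2)]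
  have e2 : dist (gapField z).2 (gapField w).2 ≤ 6 * dist z w := by
    rw [Real.dist_eq]
    refine (comp _ _ _ _).trans ?_
    rw [key3]
    nlinarith [key1, h1, h2, abs_nonneg (z.1-w.1), abs_nonneg (z.2-w.2)]
  refine max_le (e1.trans (le_of_eq ?_)) (e2.trans (le_of_eq ?_)) <;> push_cast <;> ring

lemma sol_unique {f g : ℝ → ℝ × ℝ} (hf : ∀ t, HasDerivAt f (gapField (f t)) t)
    (hg : ∀ t, HasDerivAt g (gapField (g t)) t) {a : ℝ} (h : f a = g a) : ∀ t, f t = g t := by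
  intro t
  set r := |t - a| + 1 with hrdef
  have ht : t ∈ Icc (a - r) (a + r) := by
    constructor
    · have := neg_abs_le (t - a); simp only [hrdef]; linarith
    · have := le_abs_self (t - a); simp only [hrdef]; linarith
  have ha : a ∈ Ioo (a - r) (a + r) := by
    constructor <;> · simp only [hrdef]; have := abs_nonneg (t - a); linarith
  have hcf : ContinuousOn f (Icc (a - r) (a + r)) :=
    (continuous_iff_continuousAt.mpr fun x => (hf x).continuousAt).continuousOn
  have hcg : ContinuousOn g (Icc (a - r) (a + r)) :=
    (continuous_iff_continuousAt.mpr fun x => (hg x).continuousAt).continuousOn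
  exact ODE_solution_unique_of_mem_Icc
    (v := fun _ x => gapField x) (s := fun _ => univ)
    (fun _ _ => gapField_lip.lipschitzOnWith) ha hcf
    (fun s _ => hf s) (fun _ _ => mem_univ _) hcg (fun s _ => hg s) (fun _ _ => mem_univ _) h ht

section curves
variable {z : ℝ → ℝ × ℝ} (hz : ∀ t, HasDerivAt z (gapField (z t)) t)
include hz

lemma hx (t : ℝ) : HasDerivAt (fun s => (z s).1) (gapField (z t)).1 t :=
  ((ContinuousLinearMap.fst ℝ ℝ ℝ).hasFDerivAt.comp_hasDerivAt t (hz t))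

lemma hy (t : ℝ) : HasDerivAt (fun s => (z s).2) (gapField (z t)).2 t :=
  ((ContinuousLinearMap.snd ℝ ℝ ℝ).hasFDerivAt.comp_hasDerivAt t (hz t))

/-- Part (i): energy conservation. -/
lemma energy_const : ∀ t t' : ℝ, gapEnergy (z t) = gapEnergy (z t') := by
  have hd : ∀ t, HasDerivAt (fun s => gapEnergy (z s)) 0 t := by
    intro t
    set a := (gapField (z t)).1 with hadef
    set b := (gapField (z t)).2 with hbdef
    have h1 : HasDerivAt (fun s => Real.cos (2 * (z s).1)) (-Real.sin (2*(z t).1) * (2*a)) t :=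
      ((hx hz t).const_mul 2).cos
    have h2 : HasDerivAt (fun s => Real.cos (2 * (z s).2)) (-Real.sin (2*(z t).2) * (2*b)) t :=
      ((hy hz t).const_mul 2).cos
    have h3 : HasDerivAt (fun s => Real.cos (2 * (z s).1 + 2 * (z s).2))
        (-Real.sin (2*(z t).1 + 2*(z t).2) * (2*a + 2*b)) t :=
      (((hx hz t).const_mul 2).add ((hy hz t).const_mul 2)).cos
    have := (h1.fun_add h2).fun_sub h3
    refine this.congr_deriv (Eq.symm ?_)
    simp only [hadef, hbdef, gapField]
    ring
  have hdiff : Differentiable ℝ (fun s => gapEnergy (z s)) := fun t => (hd t).differentiableAt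
  intro t t'
  exact is_const_of_deriv_eq_zero hdiff (fun t => (hd t).deriv) t t'

/-- derivative of v = x + y -/
lemma hv_deriv (t : ℝ) : HasDerivAt (fun s => (z s).1 + (z s).2)
    (2 * Real.sin ((z t).1 - (z t).2) * Real.cos ((z t).1 + (z t).2)) t := by
  have := (hx hz t).fun_add (hy hz t)
  refine this.congr_deriv (Eq.symm ?_)
  simp only [gapField]
  rw [show Real.sin (2*(z t).1+2*(z t).2) - Real.sin (2*(z t).2)
      + (Real.sin (2*(z t).1) - Real.sin (2*(z t).1+2*(z t).2))
      = Real.sin (2*(z t).1) - Real.sin (2*(z t).2) by ring, Real.sin_sub_sin]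
  ring_nf

/-- derivative of u = x − y -/
lemma hu_deriv (t : ℝ) : HasDerivAt (fun s => (z s).1 - (z s).2)
    (2 * Real.sin ((z t).1 + (z t).2) *
      (2 * Real.cos ((z t).1 + (z t).2) - Real.cos ((z t).1 - (z t).2))) t := by
  have := (hx hz t).fun_sub (hy hz t)
  refine this.congr_deriv (Eq.symm ?_)
  simp only [gapField]
  set x := (z t).1
  set y := (z t).2
  rw [show 2*x+2*y = 2*(x+y) by ring, Real.sin_two_mul, Real.sin_two_mul, Real.sin_two_mul,
    Real.sin_add, Real.cos_add, Real.cos_sub]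
  linear_combination (-2*Real.sin x*Real.cos x) * Real.sin_sq_add_cos_sq y
    + (-2*Real.sin y*Real.cos y) * Real.sin_sq_add_cos_sq x

end curves

/-- SOS identity for the energy. -/
lemma energy_sos (w : ℝ × ℝ) : gapEnergy w = 3/2 -
    ((Real.cos (2*w.1) + Real.cos (2*w.2) - 1)^2 + (Real.sin (2*w.1) - Real.sin (2*w.2))^2)/2 := by
  unfold gapEnergy
  rw [Real.cos_add]
  linear_combination (1/2) * Real.sin_sq_add_cos_sq (2*w.1) + (1/2) * Real.sin_sq_add_cos_sq (2*w.2)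

/-- product identity for the energy. -/
lemma energy_prod (w : ℝ × ℝ) : gapEnergy w
    = 1 + 4 * Real.sin w.1 * Real.sin w.2 * Real.cos (w.1 + w.2) := by
  unfold gapEnergy
  rw [show 2*w.1+2*w.2 = 2*(w.1+w.2) by ring, Real.cos_two_mul, Real.cos_two_mul,
    Real.cos_two_mul, Real.cos_add]
  linear_combination (2 - 2*Real.cos w.2^2) * Real.sin_sq_add_cos_sq w.1
    + 2*Real.sin w.1^2 * Real.sin_sq_add_cos_sq w.2

lemma energy_gt_one {w : ℝ × ℝ} (hw : w ∈ triT) : 1 < gapEnergy w := by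
  obtain ⟨h1, h2, h3⟩ := hw
  have hpi := Real.pi_pos
  rw [energy_prod]
  have s1 : 0 < Real.sin w.1 := Real.sin_pos_of_pos_of_lt_pi h1 (by linarith)
  have s2 : 0 < Real.sin w.2 := Real.sin_pos_of_pos_of_lt_pi h2 (by linarith)
  have c3 : 0 < Real.cos (w.1 + w.2) :=
    Real.cos_pos_of_mem_Ioo ⟨by linarith, h3⟩
  have : 0 < 4 * Real.sin w.1 * Real.sin w.2 * Real.cos (w.1 + w.2) := by positivity
  linarith

lemma sin_inj {a b : ℝ} (ha : 0 < a) (hb : 0 < b) (hab : a + b < Real.pi)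
    (h : Real.sin a = Real.sin b) : a = b := by
  have hpi := Real.pi_pos
  have h0 : Real.sin a - Real.sin b = 0 := by rw [h]; ring
  rw [Real.sin_sub_sin] at h0
  have hc : 0 < Real.cos ((a + b)/2) :=
    Real.cos_pos_of_mem_Ioo ⟨by linarith, by linarith⟩
  have hs : Real.sin ((a - b)/2) = 0 := by
    rcases mul_eq_zero.mp h0 with h' | h'
    · rcases mul_eq_zero.mp h' with h'' | h''
      · norm_num at h''
      · exact h''
    · linarith
  have := (Real.sin_eq_zero_iff_of_lt_of_lt (by linarith : -Real.pi < (a-b)/2)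
    (by linarith : (a-b)/2 < Real.pi)).mp hs
  linarith

lemma w1_eq_pi_three {c : ℝ} (hc0 : 0 < c) (hc1 : c < Real.pi / 2) (h : Real.cos c = 1/2) :
    c = Real.pi / 3 := by
  have hpi := Real.pi_pos
  have : Real.cos c = Real.cos (Real.pi / 3) := by rw [Real.cos_pi_div_three, h]
  have := Real.injOn_cos (mem_Icc.mpr ⟨le_of_lt hc0, by linarith⟩)
    (mem_Icc.mpr ⟨by positivity, by linarith⟩) this
  linarith

lemma stationary_iff {w : ℝ × ℝ} (hw : w ∈ triT) :
    gapField w = 0 ↔ w = (Real.pi / 6, Real.pi / 6) := by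
  obtain ⟨h1, h2, h3⟩ := hw
  have hpi := Real.pi_pos
  constructor
  · intro h
    have e1 : Real.sin (2*w.1 + 2*w.2) - Real.sin (2*w.2) = 0 := congrArg Prod.fst h
    have e2 : Real.sin (2*w.1) - Real.sin (2*w.1 + 2*w.2) = 0 := congrArg Prod.snd h
    have exy : Real.sin (2*w.1) = Real.sin (2*w.2) := by linarith
    have hw12 : w.1 = w.2 := by
      have := sin_inj (by linarith : (0:ℝ) < 2*w.1) (by linarith : (0:ℝ) < 2*w.2)
        (by linarith : 2*w.1 + 2*w.2 < Real.pi) exy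
      linarith
    have e3 : Real.sin (2*w.1 + 2*w.1) = Real.sin (2*w.1) := by
      rw [hw12] at e2 ⊢; linarith
    have e4 : Real.sin (2*(2*w.1)) = Real.sin (2*w.1) := by
      rw [show 2*(2*w.1) = 2*w.1 + 2*w.1 by ring]; exact e3
    rw [Real.sin_two_mul] at e4
    have hs : 0 < Real.sin (2*w.1) := Real.sin_pos_of_pos_of_lt_pi (by linarith)
      (by rw [hw12] at h3 ⊢; linarith)
    have hcos : Real.cos (2*w.1) = 1/2 := by
      have hne : Real.sin (2*w.1) ≠ 0 := ne_of_gt hs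
      field_simp at e4 ⊢
      nlinarith [e4]
    have := w1_eq_pi_three (by linarith : (0:ℝ) < 2*w.1)
      (by rw [hw12] at h3 ⊢; linarith : 2*w.1 < Real.pi/2) hcos
    have hw1 : w.1 = Real.pi / 6 := by linarith
    exact Prod.ext hw1 (by rw [← hw12]; exact hw1)
  · intro h
    rw [h]
    unfold gapField
    simp only
    have k1 : 2 * (Real.pi/6) = Real.pi / 3 := by ring
    rw [k1, show Real.pi/3 + Real.pi/3 = Real.pi - Real.pi/3 by ring, Real.sin_pi_sub]
    simp

lemma energy_le_max (w : ℝ × ℝ) : gapEnergy w ≤ 3/2 := by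
  rw [energy_sos]
  nlinarith [sq_nonneg (Real.cos (2*w.1) + Real.cos (2*w.2) - 1),
    sq_nonneg (Real.sin (2*w.1) - Real.sin (2*w.2))]

lemma energy_eq_max_iff {w : ℝ × ℝ} (hw : w ∈ triT) :
    gapEnergy w = 3/2 ↔ w = (Real.pi / 6, Real.pi / 6) := by
  obtain ⟨h1, h2, h3⟩ := hw
  have hpi := Real.pi_pos
  constructor
  · intro h
    rw [energy_sos] at h
    have hz : (Real.cos (2*w.1) + Real.cos (2*w.2) - 1)^2
        + (Real.sin (2*w.1) - Real.sin (2*w.2))^2 = 0 := by linarith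
    have q1 : Real.cos (2*w.1) + Real.cos (2*w.2) = 1 := by
      nlinarith [sq_nonneg (Real.cos (2*w.1) + Real.cos (2*w.2) - 1),
        sq_nonneg (Real.sin (2*w.1) - Real.sin (2*w.2))]
    have q2 : Real.sin (2*w.1) = Real.sin (2*w.2) := by
      nlinarith [sq_nonneg (Real.cos (2*w.1) + Real.cos (2*w.2) - 1),
        sq_nonneg (Real.sin (2*w.1) - Real.sin (2*w.2))]
    have hw12 : w.1 = w.2 := by
      have := sin_inj (by linarith : (0:ℝ) < 2*w.1) (by linarith : (0:ℝ) < 2*w.2)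
        (by linarith : 2*w.1 + 2*w.2 < Real.pi) q2
      linarith
    have hcos : Real.cos (2*w.1) = 1/2 := by rw [← hw12] at q1; linarith
    have := w1_eq_pi_three (by linarith : (0:ℝ) < 2*w.1)
      (by rw [hw12] at h3 ⊢; linarith : 2*w.1 < Real.pi/2) hcos
    have hw1 : w.1 = Real.pi / 6 := by linarith
    exact Prod.ext hw1 (by rw [← hw12]; exact hw1)
  · intro h
    rw [h]
    unfold gapEnergy
    simp only
    have k1 : 2 * (Real.pi/6) = Real.pi / 3 := by ring
    rw [k1, show Real.pi/3 + Real.pi/3 = Real.pi - Real.pi/3 by ring, Real.cos_pi_sub,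
      Real.cos_pi_div_three]
    norm_num

/-- A function with derivative bounded below by `δ > 0` on a half-line cannot be bounded above. -/
lemma no_bdd_deriv {f f' : ℝ → ℝ} (hf : ∀ t, HasDerivAt f (f' t) t) {δ T B : ℝ}
    (hδ : 0 < δ) (hd : ∀ t, T ≤ t → δ ≤ f' t) (hB : ∀ t, T ≤ t → f t ≤ B) : False := by
  set g : ℝ → ℝ := fun t => f t - δ * t with hg
  have hg' : ∀ t, HasDerivAt g (f' t - δ) t := by
    intro t
    have h2 : HasDerivAt (fun t : ℝ => δ * t) (δ * 1) t := (hasDerivAt_id t).const_mul δ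
    rw [mul_one] at h2
    exact (hf t).sub h2
  have hmono : MonotoneOn g (Ici T) := by
    apply monotoneOn_of_deriv_nonneg (convex_Ici T)
    · exact (continuous_iff_continuousAt.mpr fun x => (hg' x).continuousAt).continuousOn
    · intro x hx
      exact ((hg' x).differentiableAt).differentiableWithinAt
    · intro x hx
      rw [interior_Ici] at hx
      rw [(hg' x).deriv]
      have := hd x (le_of_lt hx)
      linarith
  set t₁ : ℝ := T + (B + 1 - f T) / δ with ht₁
  have hfT : f T ≤ B := hB T le_rfl
  have ht₁T : T ≤ t₁ := by
    rw [ht₁]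
    have h1 : 0 ≤ B + 1 - f T := by linarith
    have : 0 ≤ (B + 1 - f T) / δ := div_nonneg h1 (le_of_lt hδ)
    linarith
  have := hmono (self_mem_Ici) (mem_Ici.mpr ht₁T) ht₁T
  rw [hg] at this
  simp only at this
  have hft₁ : f t₁ ≤ B := hB t₁ ht₁T
  have hδt : δ * t₁ = δ * T + (B + 1 - f T) := by
    rw [ht₁]; field_simp
  nlinarith

/-- energy in terms of u = z₁ - z₂ and v = z₁ + z₂. -/
lemma energy_uv (w : ℝ × ℝ) : gapEnergy w = 1 +
    2 * Real.cos (w.1 + w.2) * (Real.cos (w.1 - w.2) - Real.cos (w.1 + w.2)) := by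
  unfold gapEnergy
  rw [show 2*w.1+2*w.2 = 2*(w.1+w.2) by ring, Real.cos_two_mul, Real.cos_two_mul,
    Real.cos_two_mul, Real.cos_add, Real.cos_sub]
  linear_combination (2 - 2*Real.cos w.2^2) * Real.sin_sq_add_cos_sq w.1
    + 2*Real.sin w.1^2 * Real.sin_sq_add_cos_sq w.2


lemma core_pos {z : ℝ → ℝ × ℝ} (hmem : ∀ t, z t ∈ triT)
    (hz : ∀ t, HasDerivAt z (gapField (z t)) t)
    (hlt : gapEnergy (z 0) < 3/2)
    (hup : ∀ t, 0 ≤ t → (z t).2 < (z t).1) : False := by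
  have hpi := Real.pi_pos
  obtain ⟨u, hu_def⟩ : ∃ u : ℝ → ℝ, u = fun t => (z t).1 - (z t).2 := ⟨_, rfl⟩
  obtain ⟨v, hv_def⟩ : ∃ v : ℝ → ℝ, v = fun t => (z t).1 + (z t).2 := ⟨_, rfl⟩
  obtain ⟨ε, hε_def⟩ : ∃ e : ℝ, e = gapEnergy (z 0) - 1 := ⟨_, rfl⟩
  have hε : 0 < ε := by rw [hε_def]; have := energy_gt_one (hmem 0); linarith
  have hε2 : ε < 1/2 := by rw [hε_def]; linarith
  -- conservation
  have hcons : ∀ t, 2 * Real.cos (v t) * (Real.cos (u t) - Real.cos (v t)) = ε := by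
    intro t
    have h1 := energy_uv (z t)
    have h2 := energy_const hz t 0
    rw [h2] at h1
    rw [hε_def, hu_def, hv_def]
    simp only
    linarith
  -- pointwise bounds
  have hvlt : ∀ t, v t < Real.pi / 2 := by
    intro t; rw [hv_def]; exact (hmem t).2.2
  have hvpos : ∀ t, 0 < v t := by
    intro t; rw [hv_def]; have h1 := (hmem t).1; have h2 := (hmem t).2.1
    simp only; linarith
  have hcosv : ∀ t, 0 < Real.cos (v t) := fun t =>
    Real.cos_pos_of_mem_Ioo ⟨by have := hvpos t; linarith, hvlt t⟩
  have hult : ∀ t, u t < Real.pi / 2 := by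
    intro t
    have h1 := (hmem t).2.1; have h2 := hvlt t
    rw [hu_def]; rw [hv_def] at h2
    simp only at h2 ⊢; linarith
  have hupos : ∀ t, 0 ≤ t → 0 < u t := by
    intro t ht; have := hup t ht; rw [hu_def]; simp only; linarith
  have huv : ∀ t, 0 ≤ t → u t < v t := by
    intro t ht; have := (hmem t).2.1; rw [hu_def, hv_def]; simp only; linarith
  have hcosuv : ∀ t, 0 ≤ t → Real.cos (v t) < Real.cos (u t) := fun t ht =>
    Real.cos_lt_cos_of_nonneg_of_le_pi (le_of_lt (hupos t ht))
      (by have := hvlt t; linarith) (huv t ht)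
  have hεcv : ∀ t, 0 ≤ t → ε / 2 ≤ Real.cos (v t) := by
    intro t ht
    have h1 := hcons t
    have h2 := hcosv t
    have h3 : Real.cos (u t) ≤ 1 := Real.cos_le_one _
    nlinarith
  have hsinu : ∀ t, 0 ≤ t → 0 < Real.sin (u t) :=
    fun t ht => Real.sin_pos_of_pos_of_lt_pi (hupos t ht) (by have := hult t; linarith)
  -- derivatives
  have hvd : ∀ t, HasDerivAt v (2 * Real.sin (u t) * Real.cos (v t)) t := by
    intro t; rw [hu_def, hv_def]; simp only; exact hv_deriv hz t
  have hud : ∀ t, HasDerivAt u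
      (2 * Real.sin (v t) * (2 * Real.cos (v t) - Real.cos (u t))) t := by
    intro t; rw [hu_def, hv_def]; simp only; exact hu_deriv hz t
  -- v is monotone on [0, ∞)
  have hvmono : MonotoneOn v (Ici (0:ℝ)) := by
    apply monotoneOn_of_deriv_nonneg (convex_Ici 0)
    · exact (continuous_iff_continuousAt.mpr fun s => (hvd s).continuousAt).continuousOn
    · exact fun s _ => ((hvd s).differentiableAt).differentiableWithinAt
    · intro s hs
      rw [interior_Ici] at hs
      rw [(hvd s).deriv]
      have h1 := hsinu s (le_of_lt hs)
      have h2 := hcosv s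
      positivity
  -- limit of v
  obtain ⟨V, hV_def⟩ : ∃ V : ℝ → ℝ, V = fun t => v (max t 0) := ⟨_, rfl⟩
  have hVmono : Monotone V := by
    intro s t hst
    rw [hV_def]
    exact hvmono (mem_Ici.mpr (le_max_right s 0)) (mem_Ici.mpr (le_max_right t 0))
      (max_le_max hst le_rfl)
  have hVbdd : BddAbove (range V) := by
    refine ⟨Real.pi / 2, ?_⟩
    rintro x ⟨t, rfl⟩
    rw [hV_def]
    exact le_of_lt (hvlt _)
  obtain ⟨L, hL_def⟩ : ∃ L : ℝ, L = ⨆ t, V t := ⟨_, rfl⟩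
  have hVL : Filter.Tendsto V Filter.atTop (nhds L) := by
    rw [hL_def]; exact tendsto_atTop_ciSup hVmono hVbdd
  have hvL : Filter.Tendsto v Filter.atTop (nhds L) := by
    apply hVL.congr'
    filter_upwards [Filter.eventually_ge_atTop (0:ℝ)] with t ht
    rw [hV_def]; simp only [max_eq_left ht]
  have hLge : v 0 ≤ L := by
    have h1 : V 0 ≤ ⨆ t, V t := le_ciSup hVbdd 0
    rw [hL_def]
    have h2 : V 0 = v 0 := by rw [hV_def]; simp
    linarith
  have hLpos : 0 < L := lt_of_lt_of_le (hvpos 0) hLge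
  have hLle : L ≤ Real.pi / 2 :=
    le_of_tendsto hvL (Filter.Eventually.of_forall fun t => le_of_lt (hvlt t))
  -- limits of cos v, sin v
  have hcvL : Filter.Tendsto (fun t => Real.cos (v t)) Filter.atTop (nhds (Real.cos L)) :=
    (Real.continuous_cos.tendsto L).comp hvL
  have hsvL : Filter.Tendsto (fun t => Real.sin (v t)) Filter.atTop (nhds (Real.sin L)) :=
    (Real.continuous_sin.tendsto L).comp hvL
  have hcosL : ε / 2 ≤ Real.cos L := by
    apply ge_of_tendsto hcvL
    filter_upwards [Filter.eventually_ge_atTop (0:ℝ)] with t ht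
    exact hεcv t ht
  have hcosLpos : 0 < Real.cos L := lt_of_lt_of_le (by linarith) hcosL
  obtain ⟨γ, hγ_def⟩ : ∃ g : ℝ, g = Real.cos L + ε / (2 * Real.cos L) := ⟨_, rfl⟩
  have hcuL : Filter.Tendsto (fun t => Real.cos (u t)) Filter.atTop (nhds γ) := by
    have h2 : Filter.Tendsto (fun t => Real.cos (v t) + ε / (2 * Real.cos (v t)))
        Filter.atTop (nhds γ) := by
      rw [hγ_def]
      exact hcvL.add (tendsto_const_nhds.div (hcvL.const_mul 2) (by positivity))
    apply h2.congr'
    filter_upwards [Filter.eventually_ge_atTop (0:ℝ)] with t ht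
    have h1 := hcons t
    have h2 := hcosv t
    field_simp
    linarith
  have hγ1 : γ ≤ 1 := le_of_tendsto hcuL
    (Filter.Eventually.of_forall fun t => Real.cos_le_one _)
  have hγ0 : 0 < γ := by
    have h1 : 0 < ε / (2 * Real.cos L) := by positivity
    rw [hγ_def]; linarith
  have hsuL : Filter.Tendsto (fun t => Real.sin (u t)) Filter.atTop
      (nhds (Real.sqrt (1 - γ^2))) := by
    have h2 : Filter.Tendsto (fun t => Real.sqrt (1 - Real.cos (u t)^2)) Filter.atTop
        (nhds (Real.sqrt (1 - γ^2))) :=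
      (Real.continuous_sqrt.tendsto _).comp (tendsto_const_nhds.sub (hcuL.pow 2))
    apply h2.congr'
    filter_upwards [Filter.eventually_ge_atTop (0:ℝ)] with t ht
    rw [show 1 - Real.cos (u t)^2 = Real.sin (u t)^2 by
      linear_combination -Real.sin_sq_add_cos_sq (u t)]
    exact Real.sqrt_sq (le_of_lt (hsinu t ht))
  -- case split on γ
  rcases lt_or_eq_of_le hγ1 with hγlt | hγeq
  · -- γ < 1 : v' has positive limit, contradiction with v bounded
    have hsq : 0 < Real.sqrt (1 - γ^2) := Real.sqrt_pos.mpr (by nlinarith)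
    have hm : 0 < 2 * Real.sqrt (1 - γ^2) * Real.cos L := by positivity
    have hv'L : Filter.Tendsto (fun t => 2 * Real.sin (u t) * Real.cos (v t))
        Filter.atTop (nhds (2 * Real.sqrt (1 - γ^2) * Real.cos L)) :=
      (hsuL.const_mul 2).mul hcvL
    have hev : ∀ᶠ t in Filter.atTop,
        Real.sqrt (1 - γ^2) * Real.cos L ≤ 2 * Real.sin (u t) * Real.cos (v t) :=
      hv'L.eventually (eventually_ge_nhds (by nlinarith))
    obtain ⟨T, hT⟩ := Filter.eventually_atTop.mp hev
    exact no_bdd_deriv hvd (by positivity : (0:ℝ) < Real.sqrt (1 - γ^2) * Real.cos L) hT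
      (fun t _ => le_of_lt (hvlt t))
  · -- γ = 1
    have hquad : 2 * Real.cos L^2 - 2 * Real.cos L + ε = 0 := by
      have h1 : Real.cos L + ε / (2 * Real.cos L) = 1 := by rw [← hγ_def, hγeq]
      field_simp at h1
      nlinarith
    have hm2 : (2 * Real.cos L - 1)^2 = 1 - 2*ε := by nlinarith
    have hmne : 2 * Real.cos L - 1 ≠ 0 := by
      intro h
      rw [h] at hm2
      simp at hm2
      linarith
    have hsinL : 0 < Real.sin L :=
      Real.sin_pos_of_pos_of_lt_pi hLpos (by linarith)
    have hu'L : Filter.Tendsto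
        (fun t => 2 * Real.sin (v t) * (2 * Real.cos (v t) - Real.cos (u t)))
        Filter.atTop (nhds (2 * Real.sin L * (2 * Real.cos L - 1))) := by
      have h := (hsvL.const_mul 2).mul ((hcvL.const_mul 2).sub hcuL)
      rw [hγeq] at h
      exact h
    rcases lt_or_gt_of_ne hmne with hmneg | hmpos
    · -- 2cos L - 1 < 0
      have hμ : 2 * Real.sin L * (2 * Real.cos L - 1)
          < Real.sin L * (2 * Real.cos L - 1) := by nlinarith
      have hev : ∀ᶠ t in Filter.atTop,
          2 * Real.sin (v t) * (2 * Real.cos (v t) - Real.cos (u t))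
            ≤ Real.sin L * (2 * Real.cos L - 1) :=
        hu'L.eventually (eventually_le_nhds hμ)
      obtain ⟨T, hT⟩ := Filter.eventually_atTop.mp hev
      have hnegd : ∀ t, HasDerivAt (fun s => -(u s))
          (-(2 * Real.sin (v t) * (2 * Real.cos (v t) - Real.cos (u t)))) t :=
        fun t => (hud t).neg
      refine no_bdd_deriv hnegd
        (show (0:ℝ) < -(Real.sin L * (2 * Real.cos L - 1)) by nlinarith)
        (T := max T 0) (B := 0) (fun t ht => ?_) (fun t ht => ?_)
      · have := hT t (le_trans (le_max_left T 0) ht)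
        linarith
      · have := hupos t (le_trans (le_max_right T 0) ht)
        linarith
    · -- 2cos L - 1 > 0
      have hμ : Real.sin L * (2 * Real.cos L - 1)
          < 2 * Real.sin L * (2 * Real.cos L - 1) := by nlinarith
      have hev : ∀ᶠ t in Filter.atTop,
          Real.sin L * (2 * Real.cos L - 1)
            ≤ 2 * Real.sin (v t) * (2 * Real.cos (v t) - Real.cos (u t)) :=
        hu'L.eventually (eventually_ge_nhds hμ)
      obtain ⟨T, hT⟩ := Filter.eventually_atTop.mp hev
      exact no_bdd_deriv hud
        (show (0:ℝ) < Real.sin L * (2 * Real.cos L - 1) by positivity) hT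
        (fun t _ => le_of_lt (hult t))

lemma core_neg {z : ℝ → ℝ × ℝ} (hmem : ∀ t, z t ∈ triT)
    (hz : ∀ t, HasDerivAt z (gapField (z t)) t)
    (hlt : gapEnergy (z 0) < 3/2)
    (hup : ∀ t, 0 ≤ t → (z t).1 < (z t).2) : False := by
  have hpi := Real.pi_pos
  obtain ⟨u, hu_def⟩ : ∃ u : ℝ → ℝ, u = fun t => (z t).1 - (z t).2 := ⟨_, rfl⟩
  obtain ⟨v, hv_def⟩ : ∃ v : ℝ → ℝ, v = fun t => (z t).1 + (z t).2 := ⟨_, rfl⟩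
  obtain ⟨ε, hε_def⟩ : ∃ e : ℝ, e = gapEnergy (z 0) - 1 := ⟨_, rfl⟩
  have hε : 0 < ε := by rw [hε_def]; have := energy_gt_one (hmem 0); linarith
  have hε2 : ε < 1/2 := by rw [hε_def]; linarith
  have hcons : ∀ t, 2 * Real.cos (v t) * (Real.cos (u t) - Real.cos (v t)) = ε := by
    intro t
    have h1 := energy_uv (z t)
    have h2 := energy_const hz t 0
    rw [h2] at h1
    rw [hε_def, hu_def, hv_def]
    simp only
    linarith
  have hvlt : ∀ t, v t < Real.pi / 2 := by
    intro t; rw [hv_def]; exact (hmem t).2.2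
  have hvpos : ∀ t, 0 < v t := by
    intro t; rw [hv_def]; have h1 := (hmem t).1; have h2 := (hmem t).2.1
    simp only; linarith
  have hcosv : ∀ t, 0 < Real.cos (v t) := fun t =>
    Real.cos_pos_of_mem_Ioo ⟨by have := hvpos t; linarith, hvlt t⟩
  have hugt : ∀ t, -(Real.pi / 2) < u t := by
    intro t
    have h1 := (hmem t).1; have h2 := hvlt t
    rw [hu_def]; rw [hv_def] at h2
    simp only at h2 ⊢; linarith
  have huneg : ∀ t, 0 ≤ t → u t < 0 := by
    intro t ht; have := hup t ht; rw [hu_def]; simp only; linarith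
  have huv : ∀ t, 0 ≤ t → -(v t) < u t := by
    intro t ht; have := (hmem t).1; rw [hu_def, hv_def]; simp only; linarith
  have hcosuv : ∀ t, 0 ≤ t → Real.cos (v t) < Real.cos (u t) := by
    intro t ht
    have h1 : Real.cos (v t) < Real.cos (-(u t)) := by
      apply Real.cos_lt_cos_of_nonneg_of_le_pi
      · have := huneg t ht; linarith
      · have := hvlt t; linarith
      · have := huv t ht; linarith
    rwa [Real.cos_neg] at h1
  have hεcv : ∀ t, 0 ≤ t → ε / 2 ≤ Real.cos (v t) := by
    intro t ht
    have h1 := hcons t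
    have h2 := hcosv t
    have h3 : Real.cos (u t) ≤ 1 := Real.cos_le_one _
    nlinarith
  have hsinu : ∀ t, 0 ≤ t → Real.sin (u t) < 0 := by
    intro t ht
    have h1 := huneg t ht
    have h2 := hugt t
    have := Real.sin_pos_of_pos_of_lt_pi (show 0 < -(u t) by linarith)
      (by linarith : -(u t) < Real.pi)
    rw [Real.sin_neg] at this
    linarith
  have hvd : ∀ t, HasDerivAt v (2 * Real.sin (u t) * Real.cos (v t)) t := by
    intro t; rw [hu_def, hv_def]; simp only; exact hv_deriv hz t
  have hud : ∀ t, HasDerivAt u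
      (2 * Real.sin (v t) * (2 * Real.cos (v t) - Real.cos (u t))) t := by
    intro t; rw [hu_def, hv_def]; simp only; exact hu_deriv hz t
  -- v is antitone on [0, ∞)
  have hvmono : AntitoneOn v (Ici (0:ℝ)) := by
    apply antitoneOn_of_deriv_nonpos (convex_Ici 0)
    · exact (continuous_iff_continuousAt.mpr fun s => (hvd s).continuousAt).continuousOn
    · exact fun s _ => ((hvd s).differentiableAt).differentiableWithinAt
    · intro s hs
      rw [interior_Ici] at hs
      rw [(hvd s).deriv]
      have h1 := hsinu s (le_of_lt hs)
      have h2 := hcosv s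
      nlinarith
  obtain ⟨V, hV_def⟩ : ∃ V : ℝ → ℝ, V = fun t => v (max t 0) := ⟨_, rfl⟩
  have hVmono : Antitone V := by
    intro s t hst
    rw [hV_def]
    exact hvmono (mem_Ici.mpr (le_max_right s 0)) (mem_Ici.mpr (le_max_right t 0))
      (max_le_max hst le_rfl)
  have hVbdd : BddBelow (range V) := by
    refine ⟨0, ?_⟩
    rintro x ⟨t, rfl⟩
    rw [hV_def]
    exact le_of_lt (hvpos _)
  obtain ⟨L, hL_def⟩ : ∃ L : ℝ, L = ⨅ t, V t := ⟨_, rfl⟩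
  have hVL : Filter.Tendsto V Filter.atTop (nhds L) := by
    rw [hL_def]; exact tendsto_atTop_ciInf hVmono hVbdd
  have hvL : Filter.Tendsto v Filter.atTop (nhds L) := by
    apply hVL.congr'
    filter_upwards [Filter.eventually_ge_atTop (0:ℝ)] with t ht
    rw [hV_def]; simp only [max_eq_left ht]
  have hL0 : 0 ≤ L :=
    ge_of_tendsto hvL (Filter.Eventually.of_forall fun t => le_of_lt (hvpos t))
  have hLle : L ≤ Real.pi / 2 :=
    le_of_tendsto hvL (Filter.Eventually.of_forall fun t => le_of_lt (hvlt t))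
  have hcvL : Filter.Tendsto (fun t => Real.cos (v t)) Filter.atTop (nhds (Real.cos L)) :=
    (Real.continuous_cos.tendsto L).comp hvL
  have hsvL : Filter.Tendsto (fun t => Real.sin (v t)) Filter.atTop (nhds (Real.sin L)) :=
    (Real.continuous_sin.tendsto L).comp hvL
  have hcosL : ε / 2 ≤ Real.cos L := by
    apply ge_of_tendsto hcvL
    filter_upwards [Filter.eventually_ge_atTop (0:ℝ)] with t ht
    exact hεcv t ht
  have hcosLpos : 0 < Real.cos L := lt_of_lt_of_le (by linarith) hcosL
  obtain ⟨γ, hγ_def⟩ : ∃ g : ℝ, g = Real.cos L + ε / (2 * Real.cos L) := ⟨_, rfl⟩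
  have hcuL : Filter.Tendsto (fun t => Real.cos (u t)) Filter.atTop (nhds γ) := by
    have h2 : Filter.Tendsto (fun t => Real.cos (v t) + ε / (2 * Real.cos (v t)))
        Filter.atTop (nhds γ) := by
      rw [hγ_def]
      exact hcvL.add (tendsto_const_nhds.div (hcvL.const_mul 2) (by positivity))
    apply h2.congr'
    filter_upwards [Filter.eventually_ge_atTop (0:ℝ)] with t ht
    have h1 := hcons t
    have h2 := hcosv t
    field_simp
    linarith
  have hγ1 : γ ≤ 1 := le_of_tendsto hcuL
    (Filter.Eventually.of_forall fun t => Real.cos_le_one _)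
  have hγ0 : 0 < γ := by
    have h1 : 0 < ε / (2 * Real.cos L) := by positivity
    rw [hγ_def]; linarith
  have hsuL : Filter.Tendsto (fun t => Real.sin (u t)) Filter.atTop
      (nhds (-Real.sqrt (1 - γ^2))) := by
    have h2 : Filter.Tendsto (fun t => -Real.sqrt (1 - Real.cos (u t)^2)) Filter.atTop
        (nhds (-Real.sqrt (1 - γ^2))) :=
      ((Real.continuous_sqrt.tendsto _).comp (tendsto_const_nhds.sub (hcuL.pow 2))).neg
    apply h2.congr'
    filter_upwards [Filter.eventually_ge_atTop (0:ℝ)] with t ht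
    rw [show 1 - Real.cos (u t)^2 = Real.sin (u t)^2 by
      linear_combination -Real.sin_sq_add_cos_sq (u t)]
    rw [Real.sqrt_sq_eq_abs, abs_of_neg (hsinu t ht)]
    ring
  rcases lt_or_eq_of_le hγ1 with hγlt | hγeq
  · -- γ < 1 : v' has negative limit, contradiction with v bounded below
    have hsq : 0 < Real.sqrt (1 - γ^2) := Real.sqrt_pos.mpr (by nlinarith)
    have hv'L : Filter.Tendsto (fun t => 2 * Real.sin (u t) * Real.cos (v t))
        Filter.atTop (nhds (2 * -Real.sqrt (1 - γ^2) * Real.cos L)) :=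
      (hsuL.const_mul 2).mul hcvL
    have hev : ∀ᶠ t in Filter.atTop,
        2 * Real.sin (u t) * Real.cos (v t) ≤ -(Real.sqrt (1 - γ^2) * Real.cos L) :=
      hv'L.eventually (eventually_le_nhds (by nlinarith))
    obtain ⟨T, hT⟩ := Filter.eventually_atTop.mp hev
    have hnegvd : ∀ t, HasDerivAt (fun s => -(v s))
        (-(2 * Real.sin (u t) * Real.cos (v t))) t := fun t => (hvd t).neg
    refine no_bdd_deriv hnegvd
      (show (0:ℝ) < Real.sqrt (1 - γ^2) * Real.cos L by positivity) (T := T) (B := 0)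
      (fun t ht => by have := hT t ht; linarith)
      (fun t ht => by have := hvpos t; linarith)
  · -- γ = 1
    have hquad : 2 * Real.cos L^2 - 2 * Real.cos L + ε = 0 := by
      have h1 : Real.cos L + ε / (2 * Real.cos L) = 1 := by rw [← hγ_def, hγeq]
      field_simp at h1
      nlinarith
    have hm2 : (2 * Real.cos L - 1)^2 = 1 - 2*ε := by nlinarith
    have hmne : 2 * Real.cos L - 1 ≠ 0 := by
      intro h
      rw [h] at hm2
      simp at hm2
      linarith
    have hLpos : 0 < L := by
      rcases lt_or_eq_of_le hL0 with h | h
      · exact h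
      · exfalso
        have : Real.cos L = 1 := by rw [← h, Real.cos_zero]
        rw [this] at hquad
        norm_num at hquad
        linarith
    have hsinL : 0 < Real.sin L :=
      Real.sin_pos_of_pos_of_lt_pi hLpos (by linarith)
    have hu'L : Filter.Tendsto
        (fun t => 2 * Real.sin (v t) * (2 * Real.cos (v t) - Real.cos (u t)))
        Filter.atTop (nhds (2 * Real.sin L * (2 * Real.cos L - 1))) := by
      have h := (hsvL.const_mul 2).mul ((hcvL.const_mul 2).sub hcuL)
      rw [hγeq] at h
      exact h
    rcases lt_or_gt_of_ne hmne with hmneg | hmpos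
    · -- 2cos L - 1 < 0 : u' eventually negative, u bounded below by -π/2
      have hμ : 2 * Real.sin L * (2 * Real.cos L - 1)
          < Real.sin L * (2 * Real.cos L - 1) := by nlinarith
      have hev : ∀ᶠ t in Filter.atTop,
          2 * Real.sin (v t) * (2 * Real.cos (v t) - Real.cos (u t))
            ≤ Real.sin L * (2 * Real.cos L - 1) :=
        hu'L.eventually (eventually_le_nhds hμ)
      obtain ⟨T, hT⟩ := Filter.eventually_atTop.mp hev
      have hnegd : ∀ t, HasDerivAt (fun s => -(u s))
          (-(2 * Real.sin (v t) * (2 * Real.cos (v t) - Real.cos (u t)))) t :=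
        fun t => (hud t).neg
      refine no_bdd_deriv hnegd
        (show (0:ℝ) < -(Real.sin L * (2 * Real.cos L - 1)) by nlinarith)
        (T := T) (B := Real.pi / 2) (fun t ht => ?_) (fun t ht => ?_)
      · have := hT t ht
        linarith
      · have := hugt t
        linarith
    · -- 2cos L - 1 > 0 : u' eventually positive, u bounded above by 0
      have hμ : Real.sin L * (2 * Real.cos L - 1)
          < 2 * Real.sin L * (2 * Real.cos L - 1) := by nlinarith
      have hev : ∀ᶠ t in Filter.atTop,
          Real.sin L * (2 * Real.cos L - 1)
            ≤ 2 * Real.sin (v t) * (2 * Real.cos (v t) - Real.cos (u t)) :=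
        hu'L.eventually (eventually_ge_nhds hμ)
      obtain ⟨T, hT⟩ := Filter.eventually_atTop.mp hev
      refine no_bdd_deriv hud
        (show (0:ℝ) < Real.sin L * (2 * Real.cos L - 1) by positivity)
        (T := max T 0) (B := 0) (fun t ht => hT t (le_trans (le_max_left T 0) ht))
        (fun t ht => le_of_lt (huneg t (le_trans (le_max_right T 0) ht)))

lemma shift_sol {z : ℝ → ℝ × ℝ} (hz : ∀ t, HasDerivAt z (gapField (z t)) t) (c : ℝ) :
    ∀ t, HasDerivAt (fun s => z (s + c)) (gapField (z (t + c))) t := by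
  intro t
  have h1 : HasDerivAt (fun s : ℝ => s + c) 1 t := (hasDerivAt_id t).add_const c
  have := (hz (t + c)).scomp t h1
  simp at this; exact this

lemma rev_sol {z : ℝ → ℝ × ℝ} (hz : ∀ t, HasDerivAt z (gapField (z t)) t) (a : ℝ) :
    ∀ t, HasDerivAt (fun s => ((z (2*a - s)).2, (z (2*a - s)).1))
      (gapField ((z (2*a - t)).2, (z (2*a - t)).1)) t := by
  intro t
  have h1 : HasDerivAt (fun s : ℝ => 2*a - s) (-1) t := by
    simpa using (hasDerivAt_const t (2*a)).fun_sub (hasDerivAt_id' t)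
  have hc : HasDerivAt (fun s => z (2*a - s)) (-gapField (z (2*a - t))) t := by
    have := (hz (2*a - t)).scomp t h1
    simp at this; exact this
  have h2 : HasDerivAt (fun s => (z (2*a - s)).2) ((-gapField (z (2*a - t))).2) t :=
    (ContinuousLinearMap.snd ℝ ℝ ℝ).hasFDerivAt.comp_hasDerivAt t hc
  have h3 : HasDerivAt (fun s => (z (2*a - s)).1) ((-gapField (z (2*a - t))).1) t :=
    (ContinuousLinearMap.fst ℝ ℝ ℝ).hasFDerivAt.comp_hasDerivAt t hc
  have h4 := h2.prodMk h3
  convert h4 using 1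
  unfold gapField
  simp only [Prod.mk.injEq, Prod.fst_neg, Prod.snd_neg]
  constructor
  · rw [add_comm (2*(z (2*a - t)).2) (2*(z (2*a - t)).1)]; ring
  · rw [add_comm (2*(z (2*a - t)).2) (2*(z (2*a - t)).1)]; ring

/-- after a diagonal crossing at time `a`, the solution is the swapped time-reversal. -/
lemma diag_reflect {z : ℝ → ℝ × ℝ} (hz : ∀ t, HasDerivAt z (gapField (z t)) t)
    {a : ℝ} (ha : (z a).1 = (z a).2) :
    ∀ t, z t = ((z (2*a - t)).2, (z (2*a - t)).1) := by
  apply sol_unique hz (rev_sol hz a) (a := a)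
  have : 2*a - a = a := by ring
  rw [this]
  exact Prod.ext ha ha.symm

/-- existence of diagonal crossings at arbitrarily late times. -/
lemma exists_diag {z : ℝ → ℝ × ℝ} (hmem : ∀ t, z t ∈ triT)
    (hz : ∀ t, HasDerivAt z (gapField (z t)) t)
    (hlt : gapEnergy (z 0) < 3/2) (T₀ : ℝ) :
    ∃ t, T₀ ≤ t ∧ (z t).1 = (z t).2 := by
  by_contra h
  push_neg at h
  have hcont : Continuous (fun t => (z t).1 - (z t).2) := by
    have : Continuous z := continuous_iff_continuousAt.mpr fun s => (hz s).continuousAt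
    fun_prop
  -- constant sign on [T₀, ∞)
  have hsign : (∀ t, T₀ ≤ t → (z t).2 < (z t).1) ∨ (∀ t, T₀ ≤ t → (z t).1 < (z t).2) := by
    rcases lt_or_gt_of_ne (sub_ne_zero.mpr (h T₀ le_rfl)) with hneg | hpos
    · -- (z T₀).1 < (z T₀).2
      right
      intro t ht
      by_contra hcon
      push_neg at hcon
      have hgt : 0 < (z t).1 - (z t).2 :=
        lt_of_le_of_ne (by linarith) (fun hh => h t ht (by linarith))
      have hmem0 : (0:ℝ) ∈ Icc ((fun t => (z t).1 - (z t).2) T₀) ((fun t => (z t).1 - (z t).2) t) :=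
        ⟨by simp only; linarith, by simp only; linarith⟩
      obtain ⟨s, hs, hs0⟩ := intermediate_value_Icc ht (hcont.continuousOn) hmem0
      exact h s hs.1 (by simpa [sub_eq_zero] using hs0)
    · -- (z T₀).2 < (z T₀).1
      left
      intro t ht
      by_contra hcon
      push_neg at hcon
      have hgt : (z t).1 - (z t).2 < 0 :=
        lt_of_le_of_ne (by linarith) (fun hh => h t ht (by linarith))
      have hmem0 : (0:ℝ) ∈ Icc ((fun t => (z t).1 - (z t).2) t) ((fun t => (z t).1 - (z t).2) T₀) :=
        ⟨by simp only; linarith, by simp only; linarith⟩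
      obtain ⟨s, hs, hs0⟩ := intermediate_value_Icc' ht (hcont.continuousOn) hmem0
      exact h s hs.1 (by simpa [sub_eq_zero] using hs0)
  -- shift the solution and apply the core lemmas
  set y : ℝ → ℝ × ℝ := fun t => z (t + T₀) with hy_def
  have hymem : ∀ t, y t ∈ triT := fun t => hmem (t + T₀)
  have hyz : ∀ t, HasDerivAt y (gapField (y t)) t := fun t => shift_sol hz T₀ t
  have hylt : gapEnergy (y 0) < 3/2 := by
    have : gapEnergy (y 0) = gapEnergy (z 0) := by
      rw [hy_def]; simp only [zero_add]; exact energy_const hz T₀ 0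
    linarith
  rcases hsign with hpos | hneg
  · exact core_pos hymem hyz hylt (fun t ht => hpos (t + T₀) (by linarith))
  · exact core_neg hymem hyz hylt (fun t ht => hneg (t + T₀) (by linarith))

/-- The three-point-vortex gap system is a completely integrable Hamiltonian system:
(i) `E` is a first integral; (ii) the only stationary point in `T` is `(π/6, π/6)`,
where `E` attains its strict maximum `3/2`; (iii) every non-stationary solution staying
in `T` is periodic. -/
theorem gap_system_integrable :
    (∀ z : ℝ → ℝ × ℝ, (∀ t, z t ∈ triT) → (∀ t, HasDerivAt z (gapField (z t)) t) →
      ∀ t t' : ℝ, gapEnergy (z t) = gapEnergy (z t')) ∧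
    ((∀ w ∈ triT, (gapField w = 0 ↔ w = (Real.pi / 6, Real.pi / 6))) ∧
      ∀ w ∈ triT, gapEnergy w ≤ 3 / 2 ∧
        (gapEnergy w = 3 / 2 ↔ w = (Real.pi / 6, Real.pi / 6))) ∧
    (∀ z : ℝ → ℝ × ℝ, (∀ t, z t ∈ triT) → (∀ t, HasDerivAt z (gapField (z t)) t) →
      z 0 ≠ (Real.pi / 6, Real.pi / 6) →
      ∃ τ : ℝ, 0 < τ ∧ ∀ t : ℝ, z (t + τ) = z t) := by
  refine ⟨fun z _ hz => energy_const hz, ⟨fun w hw => stationary_iff hw,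
    fun w hw => ⟨energy_le_max w, energy_eq_max_iff hw⟩⟩, ?_⟩
  intro z hmem hz hne
  have hlt : gapEnergy (z 0) < 3/2 :=
    lt_of_le_of_ne (energy_le_max (z 0)) (fun h => hne ((energy_eq_max_iff (hmem 0)).mp h))
  obtain ⟨t₁, _, hd₁⟩ := exists_diag hmem hz hlt 0
  obtain ⟨t₂, ht₂, hd₂⟩ := exists_diag hmem hz hlt (t₁ + 1)
  have h₁ := diag_reflect hz hd₁
  have h₂ := diag_reflect hz hd₂
  refine ⟨2 * (t₂ - t₁), by linarith, fun t => ?_⟩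
  have e1 := h₂ (t + 2 * (t₂ - t₁))
  have e2 : 2*t₂ - (t + 2 * (t₂ - t₁)) = 2*t₁ - t := by ring
  rw [e2] at e1
  rw [e1, ← h₁ t]
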